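/- For any integer n ≥ 2, the upper traceable number of the path P_n on n vertices equals n²/2 - 1 if n is even, and (n² - 1)/2 - 1 if n is odd. -/

import Mathlib

/-- The path graph on vertices `0, 1, …, n-1` (consecutive integers adjacent). -/
def pathG (n : ℕ) : SimpleGraph (Fin n) where
  Adj i j := i.val + 1 = j.val ∨ j.val + 1 = i.val
  symm := ⟨by intro i j h; (try simp only at *); tauto⟩
  loopless := ⟨by intro i h; (try simp only at *); omega⟩

/-- The sum `d(s) = Σ d(x_i, x_{i+1})` along a linear ordering of the vertices,
given as a list. -/
noncomputable def orderingSum {V : Type*} (G : SimpleGraph V) (l : List V) : ℕ :=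
  ((l.zip l.tail).map fun p => G.dist p.1 p.2).sum



lemma pathG_walk_lb {n : ℕ} {a b : Fin n} (p : (pathG n).Walk a b) :
    (a.val - b.val) + (b.val - a.val) ≤ p.length := by
  induction p with
  | nil => simp
  | @cons u v w h q ih =>
    have h' : u.val + 1 = v.val ∨ v.val + 1 = u.val := h
    simp only [SimpleGraph.Walk.length_cons]
    omega

lemma pathG_walk_ub {n : ℕ} : ∀ (k : ℕ) (a b : Fin n), a.val + k = b.val →
    ∃ p : (pathG n).Walk a b, p.length = k := by
  intro k
  induction k with
  | zero =>
    intro a b hab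
    have : a = b := Fin.ext (by omega)
    subst this
    exact ⟨SimpleGraph.Walk.nil, rfl⟩
  | succ k ih =>
    intro a b hab
    have hlt : a.val + 1 < n := by have := b.isLt; omega
    set a' : Fin n := ⟨a.val + 1, hlt⟩ with ha'
    have hadj : (pathG n).Adj a a' := Or.inl rfl
    obtain ⟨p, hp⟩ := ih a' b (by simp [ha']; omega)
    exact ⟨SimpleGraph.Walk.cons hadj p, by simp [hp]⟩

lemma pathG_dist {n : ℕ} (a b : Fin n) :
    (pathG n).dist a b = (a.val - b.val) + (b.val - a.val) := by
  rcases le_total a.val b.val with h | h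
  · obtain ⟨p, hp⟩ := pathG_walk_ub (b.val - a.val) a b (by omega)
    refine le_antisymm ?_ ?_
    · have := SimpleGraph.dist_le p; omega
    · obtain ⟨q, hq⟩ := SimpleGraph.Reachable.exists_walk_length_eq_dist ⟨p⟩
      have := pathG_walk_lb q; omega
  · obtain ⟨p, hp⟩ := pathG_walk_ub (a.val - b.val) b a (by omega)
    refine le_antisymm ?_ ?_
    · have := SimpleGraph.dist_le p.reverse
      simp [SimpleGraph.Walk.length_reverse] at this; omega
    · obtain ⟨q, hq⟩ := SimpleGraph.Reachable.exists_walk_length_eq_dist ⟨p.reverse⟩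
      have := pathG_walk_lb q; omega



lemma orderingSum_cons₂ {V : Type*} (G : SimpleGraph V) (a b : V) (t : List V) :
    orderingSum G (a :: b :: t) = G.dist a b + orderingSum G (b :: t) := by
  simp [orderingSum]

lemma orderingSum_eq_sum {V : Type*} (G : SimpleGraph V) (d : V) :
    ∀ (l : List V), orderingSum G l =
      ∑ i ∈ Finset.range (l.length - 1), G.dist (l.getD i d) (l.getD (i+1) d) := by
  intro l
  induction l with
  | nil => simp [orderingSum]
  | cons a l ih =>
    cases l with
    | nil => simp [orderingSum]
    | cons b t =>
      rw [orderingSum_cons₂, ih]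
      simp only [List.length_cons, Nat.add_sub_cancel]
      rw [Finset.sum_range_succ', Nat.add_comm]
      congr 1


lemma card_filter_le_val (n j : ℕ) (hj : j + 1 ≤ n) :
    (Finset.univ.filter (fun v : Fin n => v.val ≤ j)).card = j + 1 := by
  rw [← Finset.card_range (j+1)]
  refine Finset.card_bij' (fun (v : Fin n) _ => v.val)
      (fun (i : ℕ) hi => (⟨i, by simp at hi; omega⟩ : Fin n)) ?_ ?_ ?_ ?_
  · intro a ha
    simp at ha ⊢
    omega
  · intro a ha
    simp at ha ⊢
    omega
  · intro a ha; rfl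
  · intro a ha; rfl

lemma card_filter_gt_val (n j : ℕ) (hj : j + 1 ≤ n) :
    (Finset.univ.filter (fun v : Fin n => ¬ v.val ≤ j)).card = n - (j + 1) := by
  have h := Finset.card_filter_add_card_filter_not
    (s := (Finset.univ : Finset (Fin n))) (p := fun v : Fin n => v.val ≤ j)
  rw [card_filter_le_val n j hj] at h
  simp only [Finset.card_univ, Fintype.card_fin] at h
  omega


section
variable {n : ℕ} (x : ℕ → Fin n)

lemma cross_bound
    (hinj : ∀ i < n, ∀ j < n, x i = x j → i = j) (p : Fin n → Bool) :
    ((Finset.range (n-1)).filter (fun i => p (x i) ≠ p (x (i+1)))).card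
      ≤ 2 * (Finset.univ.filter (fun v => p v = true)).card := by
  classical
  set C := (Finset.range (n-1)).filter (fun i => p (x i) ≠ p (x (i+1))) with hC
  set s : ℕ → ℕ := fun i => if p (x i) = true then i else i + 1 with hs
  have hsmem : ∀ i ∈ C, s i < n ∧ p (x (s i)) = true := by
    intro i hi
    simp only [hC, Finset.mem_filter, Finset.mem_range] at hi
    obtain ⟨hi1, hi2⟩ := hi
    by_cases h : p (x i) = true
    · exact ⟨by simp [hs, h]; omega, by simp [hs, h]⟩
    · have h2 : p (x (i+1)) = true := by
        revert hi2 h; cases hpp : p (x i) <;> cases hqq : p (x (i+1)) <;> simp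
      exact ⟨by simp [hs, h]; omega, by simp [hs, h, h2]⟩
  have key : C.card = ∑ j ∈ C.image s, (C.filter (fun i => s i = j)).card :=
    Finset.card_eq_sum_card_image s C
  have himg : C.image s ⊆ (Finset.range n).filter (fun j => p (x j) = true) := by
    intro j hj
    simp only [Finset.mem_image] at hj
    obtain ⟨i, hi, rfl⟩ := hj
    obtain ⟨h1, h2⟩ := hsmem i hi
    simp [Finset.mem_filter, Finset.mem_range, h1, h2]
  have himgcard : ((Finset.range n).filter (fun j => p (x j) = true)).card
      ≤ (Finset.univ.filter (fun v => p v = true)).card := by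
    apply Finset.card_le_card_of_injOn (fun j => x j)
    · intro j hj
      simp only [Finset.mem_coe, Finset.mem_filter, Finset.mem_range] at hj
      simp [hj.2]
    · intro i hi j hj hij
      simp only [Finset.coe_filter, Set.mem_setOf_eq, Finset.mem_range] at hi hj
      exact hinj i hi.1 j hj.1 hij
  have hfib : ∀ j, (C.filter (fun i => s i = j)).card ≤ 2 := by
    intro j
    have hsub : C.filter (fun i => s i = j) ⊆ ({j - 1, j} : Finset ℕ) := by
      intro i hi
      simp only [Finset.mem_filter] at hi
      have : s i = i ∨ s i = i + 1 := by by_cases h : p (x i) = true <;> simp [hs, h]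
      simp only [Finset.mem_insert, Finset.mem_singleton]
      omega
    calc (C.filter (fun i => s i = j)).card ≤ ({j-1, j} : Finset ℕ).card :=
          Finset.card_le_card hsub
      _ ≤ 2 := by apply le_trans (Finset.card_insert_le _ _); simp
  calc C.card = ∑ j ∈ C.image s, (C.filter (fun i => s i = j)).card := key
    _ ≤ (C.image s).card * 2 := by
        have := Finset.sum_le_card_nsmul (C.image s)
          (fun j => (C.filter (fun i => s i = j)).card) 2 (fun j _ => hfib j)
        simpa using this
    _ ≤ _ := by
        have := le_trans (Finset.card_le_card himg) himgcard
        omega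
end


section
variable {n : ℕ} (x : ℕ → Fin n)

lemma cross_bound_endpoint
    (hinj : ∀ i < n, ∀ j < n, x i = x j → i = j) (p : Fin n → Bool)
    (j0 c0 : ℕ) (hj0 : j0 < n) (hp0 : p (x j0) = true)
    (harith : ∀ i, i < n - 1 → (j0 = i ∨ j0 = i + 1) → i = c0) :
    ((Finset.range (n-1)).filter (fun i => p (x i) ≠ p (x (i+1)))).card + 1
      ≤ 2 * (Finset.univ.filter (fun v => p v = true)).card := by
  classical
  set C := (Finset.range (n-1)).filter (fun i => p (x i) ≠ p (x (i+1))) with hC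
  set s : ℕ → ℕ := fun i => if p (x i) = true then i else i + 1 with hs
  set T' := (Finset.range n).filter (fun j => p (x j) = true) with hT'
  set t := (Finset.univ.filter (fun v => p v = true)).card with ht
  have hsmem : ∀ i ∈ C, s i < n ∧ p (x (s i)) = true := by
    intro i hi
    simp only [hC, Finset.mem_filter, Finset.mem_range] at hi
    obtain ⟨hi1, hi2⟩ := hi
    by_cases h : p (x i) = true
    · exact ⟨by simp [hs, h]; omega, by simp [hs, h]⟩
    · have h2 : p (x (i+1)) = true := by
        revert hi2 h; cases hpp : p (x i) <;> cases hqq : p (x (i+1)) <;> simp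
      exact ⟨by simp [hs, h]; omega, by simp [hs, h, h2]⟩
  have hsrange : ∀ i ∈ C, s i = i ∨ s i = i + 1 := by
    intro i _; by_cases h : p (x i) = true <;> simp [hs, h]
  have key : C.card = ∑ j ∈ C.image s, (C.filter (fun i => s i = j)).card :=
    Finset.card_eq_sum_card_image s C
  have himg : C.image s ⊆ T' := by
    intro j hj
    simp only [Finset.mem_image] at hj
    obtain ⟨i, hi, rfl⟩ := hj
    obtain ⟨h1, h2⟩ := hsmem i hi
    simp [hT', Finset.mem_filter, Finset.mem_range, h1, h2]
  have hT'card : T'.card ≤ t := by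
    apply Finset.card_le_card_of_injOn (fun j => x j)
    · intro j hj
      simp only [hT', Finset.mem_coe, Finset.mem_filter, Finset.mem_range] at hj
      simp [ht, hj.2]
    · intro i hi j hj hij
      simp only [hT', Finset.coe_filter, Set.mem_setOf_eq, Finset.mem_range] at hi hj
      exact hinj i hi.1 j hj.1 hij
  have hj0T' : j0 ∈ T' := by simp [hT', Finset.mem_filter, Finset.mem_range, hj0, hp0]
  have hT'pos : 1 ≤ T'.card := Finset.card_pos.mpr ⟨j0, hj0T'⟩
  have hfib : ∀ j, (C.filter (fun i => s i = j)).card ≤ 2 := by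
    intro j
    have hsub : C.filter (fun i => s i = j) ⊆ ({j - 1, j} : Finset ℕ) := by
      intro i hi
      simp only [Finset.mem_filter] at hi
      have := hsrange i hi.1
      simp only [Finset.mem_insert, Finset.mem_singleton]
      omega
    calc (C.filter (fun i => s i = j)).card ≤ ({j-1, j} : Finset ℕ).card :=
          Finset.card_le_card hsub
      _ ≤ 2 := by apply le_trans (Finset.card_insert_le _ _); simp
  have hfib0 : (C.filter (fun i => s i = j0)).card ≤ 1 := by
    have hsub : C.filter (fun i => s i = j0) ⊆ ({c0} : Finset ℕ) := by
      intro i hi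
      simp only [Finset.mem_filter] at hi
      have h1 := hsrange i hi.1
      have h2 : i < n - 1 := by
        have := hi.1; simp only [hC, Finset.mem_filter, Finset.mem_range] at this
        exact this.1
      simp only [Finset.mem_singleton]
      exact harith i h2 (by omega)
    calc _ ≤ ({c0} : Finset ℕ).card := Finset.card_le_card hsub
      _ = 1 := by simp
  by_cases hj0img : j0 ∈ C.image s
  · have hsplit : ∑ j ∈ (C.image s).erase j0, (C.filter (fun i => s i = j)).card
        + (C.filter (fun i => s i = j0)).card
        = ∑ j ∈ C.image s, (C.filter (fun i => s i = j)).card :=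
      Finset.sum_erase_add _ _ hj0img
    have herase : ∑ j ∈ (C.image s).erase j0, (C.filter (fun i => s i = j)).card
        ≤ ((C.image s).erase j0).card * 2 := by
      have := Finset.sum_le_card_nsmul ((C.image s).erase j0)
        (fun j => (C.filter (fun i => s i = j)).card) 2 (fun j _ => hfib j)
      simpa using this
    have hec : ((C.image s).erase j0).card = (C.image s).card - 1 :=
      Finset.card_erase_of_mem hj0img
    have himgpos : 1 ≤ (C.image s).card := Finset.card_pos.mpr ⟨j0, hj0img⟩
    have himgle : (C.image s).card ≤ T'.card := Finset.card_le_card himg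
    omega
  · have himg2 : C.image s ⊆ T'.erase j0 := by
      intro j hj
      rw [Finset.mem_erase]
      exact ⟨fun h => hj0img (h ▸ hj), himg hj⟩
    have h1 : (C.image s).card ≤ T'.card - 1 := by
      have := Finset.card_le_card himg2
      rw [Finset.card_erase_of_mem hj0T'] at this
      exact this
    have h2 : C.card ≤ (C.image s).card * 2 := by
      rw [key]
      have := Finset.sum_le_card_nsmul (C.image s)
        (fun j => (C.filter (fun i => s i = j)).card) 2 (fun j _ => hfib j)
      simpa using this
    omega
end



lemma dist_eq_card {n : ℕ} (a b : Fin n) :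
    (pathG n).dist a b = ((Finset.range (n-1)).filter
      (fun j => decide (a.val ≤ j) ≠ decide (b.val ≤ j))).card := by
  rw [pathG_dist]
  have hset : ((Finset.range (n-1)).filter
      (fun j => decide (a.val ≤ j) ≠ decide (b.val ≤ j)))
      = Finset.Ico (min a.val b.val) (max a.val b.val) := by
    ext j
    simp only [Finset.mem_filter, Finset.mem_range, Finset.mem_Ico, ne_eq,
      decide_eq_decide, lt_min_iff, min_le_iff, lt_max_iff, max_lt_iff]
    have ha := a.isLt
    have hb := b.isLt
    constructor
    · rintro ⟨h1, h2⟩; omega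
    · rintro ⟨h1, h2⟩; omega
  rw [hset, Nat.card_Ico]
  omega

lemma Tsum : ∀ n : ℕ, (∑ j ∈ Finset.range (n - 1), 2 * min (j+1) (n-1-j)) = n^2/2 := by
  intro n
  induction n using Nat.strong_induction_on with
  | _ n ih =>
    match n with
    | 0 => simp
    | 1 => simp
    | 2 => decide
    | (m+3) =>
      have hrec : (∑ j ∈ Finset.range (m+2), 2 * min (j+1) (m+2-j))
          = 2 + ((∑ j ∈ Finset.range m, 2 * min (j+1) (m-j)) + 2*m) + 2 := by
        rw [Finset.sum_range_succ, Finset.sum_range_succ']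
        have hcong : ∀ j ∈ Finset.range m, 2 * min (j+1+1) (m+2-(j+1))
            = 2 * min (j+1) (m-j) + 2 := by
          intro j hj
          simp only [Finset.mem_range] at hj
          simp only [Nat.min_def]
          split_ifs <;> omega
        rw [Finset.sum_congr rfl hcong, Finset.sum_add_distrib, Finset.sum_const,
          Finset.card_range, smul_eq_mul]
        have h1 : 2 * min (0+1) (m+2-0) = 2 := by simp [Nat.min_def]
        have h2 : 2 * min (m+1+1) (m+2-(m+1)) = 2 := by
          simp [Nat.min_def]
        omega
      have hih := ih (m+1) (by omega)
      have e1 : m + 3 - 1 = m + 2 := by omega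
      have e2 : m + 1 - 1 = m := by omega
      rw [e2] at hih
      rw [e1, hrec, hih]
      have hsq : (m+3)^2 = (m+1)^2 + (4*m+8) := by ring
      omega




lemma upper_bound (n : ℕ) (hn : 2 ≤ n) (l : List (Fin n)) (hnd : l.Nodup)
    (hl : l.length = n) : orderingSum (pathG n) l ≤ n^2/2 - 1 := by
  classical
  set d0 : Fin n := ⟨0, by omega⟩ with hd0
  set x : ℕ → Fin n := fun i => l.getD i d0 with hx
  have hinj : ∀ i < n, ∀ j < n, x i = x j → i = j := by
    intro i hi j hj hij
    rw [hx] at hij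
    simp only at hij
    rw [List.getD_eq_getElem l d0 (n := i) (by omega), List.getD_eq_getElem l d0 (n := j) (by omega)] at hij
    exact (List.Nodup.getElem_inj_iff hnd).mp hij
  -- the crossing count
  set c : ℕ → ℕ := fun j => ((Finset.range (n-1)).filter
      (fun i => decide ((x i).val ≤ j) ≠ decide ((x (i+1)).val ≤ j))).card with hc
  -- rewrite orderingSum as double sum
  have hsum : orderingSum (pathG n) l = ∑ j ∈ Finset.range (n-1), c j := by
    rw [orderingSum_eq_sum (pathG n) d0 l, hl]
    have h1 : ∀ i, (pathG n).dist (x i) (x (i+1)) =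
        ∑ j ∈ Finset.range (n-1),
          (if decide ((x i).val ≤ j) ≠ decide ((x (i+1)).val ≤ j) then 1 else 0) := by
      intro i
      rw [dist_eq_card, Finset.card_filter]
    calc ∑ i ∈ Finset.range (n-1), (pathG n).dist (l.getD i d0) (l.getD (i+1) d0)
        = ∑ i ∈ Finset.range (n-1), ∑ j ∈ Finset.range (n-1),
          (if decide ((x i).val ≤ j) ≠ decide ((x (i+1)).val ≤ j) then 1 else 0) := by
          exact Finset.sum_congr rfl (fun i _ => h1 i)
      _ = ∑ j ∈ Finset.range (n-1), ∑ i ∈ Finset.range (n-1),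
          (if decide ((x i).val ≤ j) ≠ decide ((x (i+1)).val ≤ j) then 1 else 0) :=
          Finset.sum_comm
      _ = ∑ j ∈ Finset.range (n-1), c j := by
          refine Finset.sum_congr rfl (fun j _ => ?_)
          rw [hc]
          simp only
          rw [Finset.card_filter]
  rw [hsum]
  -- general bound on c j
  have hcb : ∀ j ∈ Finset.range (n-1), c j ≤ 2 * min (j+1) (n-1-j) := by
    intro j hj
    simp only [Finset.mem_range] at hj
    have hlow := cross_bound x hinj (fun v => decide (v.val ≤ j))
    beta_reduce at hlow
    have ht1 : (Finset.univ.filter (fun v : Fin n => decide (v.val ≤ j) = true)).card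
        = j + 1 := by
      rw [Finset.filter_congr (fun (v : Fin n) _ => by simp : ∀ v ∈ Finset.univ,
        (decide (v.val ≤ j) = true) ↔ v.val ≤ j)]
      exact card_filter_le_val n j (by omega)
    rw [ht1] at hlow
    have hhigh := cross_bound x hinj (fun v => decide (¬ v.val ≤ j))
    beta_reduce at hhigh
    have ht2 : (Finset.univ.filter (fun v : Fin n => decide (¬ v.val ≤ j) = true)).card
        = n - (j + 1) := by
      rw [Finset.filter_congr (fun (v : Fin n) _ => by simp : ∀ v ∈ Finset.univ,
        (decide (¬ v.val ≤ j) = true) ↔ ¬ v.val ≤ j)]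
      exact card_filter_gt_val n j (by omega)
    rw [ht2] at hhigh
    have hee : n - (j+1) = n - 1 - j := by omega
    rw [hee] at hhigh
    have hCeq : ((Finset.range (n-1)).filter
        (fun i => decide (¬ (x i).val ≤ j) ≠ decide (¬ (x (i+1)).val ≤ j)))
        = (Finset.range (n-1)).filter
        (fun i => decide ((x i).val ≤ j) ≠ decide ((x (i+1)).val ≤ j)) := by
      apply Finset.filter_congr
      intro i _
      simp only [ne_eq, decide_eq_decide]
      tauto
    rw [hCeq] at hhigh
    have hc1 : c j ≤ 2 * (j+1) := hlow
    have hc2 : c j ≤ 2 * (n-1-j) := hhigh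
    rcases Nat.le_total (j+1) (n-1-j) with h | h
    · rw [min_eq_left h]; exact hc1
    · rw [min_eq_right h]; exact hc2
  -- the endpoint refinement helpers
  have hlowstar : ∀ j0 c0, j0 < n → (∀ i, i < n - 1 → (j0 = i ∨ j0 = i + 1) → i = c0) →
      (x j0).val < n/2 →
      ∃ js ∈ Finset.range (n-1), c js + 1 ≤ 2 * min (js+1) (n-1-js) := by
    intro j0 c0 hj0 harith hval
    refine ⟨n/2 - 1, by simp only [Finset.mem_range]; omega, ?_⟩
    have h := cross_bound_endpoint x hinj (fun v => decide (v.val ≤ n/2 - 1)) j0 c0 hj0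
      (by simp; omega) harith
    beta_reduce at h
    have ht1 : (Finset.univ.filter (fun v : Fin n => decide (v.val ≤ n/2 - 1) = true)).card
        = (n/2 - 1) + 1 := by
      rw [Finset.filter_congr (fun (v : Fin n) _ => by simp : ∀ v ∈ Finset.univ,
        (decide (v.val ≤ n/2 - 1) = true) ↔ v.val ≤ n/2 - 1)]
      exact card_filter_le_val n (n/2 - 1) (by omega)
    rw [ht1] at h
    have hmin : min ((n/2-1)+1) (n-1-(n/2-1)) = (n/2-1)+1 :=
      min_eq_left (by omega)
    rw [hmin]
    exact h
  have hhighstar : ∀ j0 c0, j0 < n → (∀ i, i < n - 1 → (j0 = i ∨ j0 = i + 1) → i = c0) →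
      (n+1)/2 ≤ (x j0).val →
      ∃ js ∈ Finset.range (n-1), c js + 1 ≤ 2 * min (js+1) (n-1-js) := by
    intro j0 c0 hj0 harith hval
    refine ⟨(n+1)/2 - 1, by simp only [Finset.mem_range]; omega, ?_⟩
    have h := cross_bound_endpoint x hinj (fun v => decide (¬ v.val ≤ (n+1)/2 - 1)) j0 c0 hj0
      (by simp; omega) harith
    beta_reduce at h
    have ht2 : (Finset.univ.filter
        (fun v : Fin n => decide (¬ v.val ≤ (n+1)/2 - 1) = true)).card
        = n - (((n+1)/2 - 1) + 1) := by
      rw [Finset.filter_congr (fun (v : Fin n) _ => by simp : ∀ v ∈ Finset.univ,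
        (decide (¬ v.val ≤ (n+1)/2 - 1) = true) ↔ ¬ v.val ≤ (n+1)/2 - 1)]
      exact card_filter_gt_val n ((n+1)/2 - 1) (by omega)
    rw [ht2] at h
    have hCeq : ((Finset.range (n-1)).filter
        (fun i => decide (¬ (x i).val ≤ (n+1)/2 - 1) ≠ decide (¬ (x (i+1)).val ≤ (n+1)/2 - 1)))
        = (Finset.range (n-1)).filter
        (fun i => decide ((x i).val ≤ (n+1)/2 - 1) ≠ decide ((x (i+1)).val ≤ (n+1)/2 - 1)) := by
      apply Finset.filter_congr
      intro i _
      simp only [ne_eq, decide_eq_decide]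
      tauto
    rw [hCeq] at h
    have hmin : min (((n+1)/2-1)+1) (n-1-((n+1)/2-1)) = n - (((n+1)/2 - 1) + 1) := by
      rw [min_eq_right (by omega : n-1-((n+1)/2-1) ≤ ((n+1)/2-1)+1)]
      omega
    rw [hmin]
    exact h
  -- choose the special threshold
  have hstar : ∃ js ∈ Finset.range (n-1), c js + 1 ≤ 2 * min (js+1) (n-1-js) := by
    have hne : x 0 ≠ x (n-1) := by
      intro h
      have := hinj 0 (by omega) (n-1) (by omega) h
      omega
    by_cases hA : (x 0).val < n/2
    · exact hlowstar 0 0 (by omega) (by omega) hA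
    · by_cases hB : (n+1)/2 ≤ (x 0).val
      · exact hhighstar 0 0 (by omega) (by omega) hB
      · -- x 0 is the middle vertex of an odd path; use the other endpoint
        have hmid : 2 * (x 0).val = n - 1 ∧ n % 2 = 1 := by omega
        have hbne : (x (n-1)).val ≠ (x 0).val := by
          intro h
          exact hne (Fin.ext h.symm)
        by_cases hA' : (x (n-1)).val < n/2
        · exact hlowstar (n-1) (n-2) (by omega) (by omega) hA'
        · have hB' : (n+1)/2 ≤ (x (n-1)).val := by omega
          exact hhighstar (n-1) (n-2) (by omega) (by omega) hB'
  obtain ⟨js, hjs, hjsb⟩ := hstar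
  have hsplit : ∑ j ∈ (Finset.range (n-1)).erase js, c j + c js
      = ∑ j ∈ Finset.range (n-1), c j := Finset.sum_erase_add _ _ hjs
  have hsplit2 : ∑ j ∈ (Finset.range (n-1)).erase js, (2 * min (j+1) (n-1-j))
      + 2 * min (js+1) (n-1-js)
      = ∑ j ∈ Finset.range (n-1), 2 * min (j+1) (n-1-j) := Finset.sum_erase_add _ _ hjs
  have hmono : ∑ j ∈ (Finset.range (n-1)).erase js, c j
      ≤ ∑ j ∈ (Finset.range (n-1)).erase js, (2 * min (j+1) (n-1-j)) :=
    Finset.sum_le_sum (fun j hj => hcb j (Finset.mem_of_mem_erase hj))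
  have hT := Tsum n
  omega




def wf (n i : ℕ) : ℕ :=
  if n % 2 = 0 then (if i % 2 = 0 then n/2 - 1 - i/2 else n - 1 - i/2)
  else (if i = 0 then n/2 else if i % 2 = 1 then n - 1 - i/2 else min (i/2 - 1) (n-1))

lemma wf_lt (n i : ℕ) (hn : 2 ≤ n) : wf n i < n := by
  simp only [wf, Nat.min_def]
  split_ifs <;> omega

lemma sum_mod_two (N : ℕ) : ∑ i ∈ Finset.range N, i % 2 = N / 2 := by
  induction N with
  | zero => simp
  | succ m ih => rw [Finset.sum_range_succ, ih]; omega

lemma lower_bound (n : ℕ) (hn : 2 ≤ n) :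
    ∃ l : List (Fin n), l.Nodup ∧ l.length = n ∧
      orderingSum (pathG n) l = n^2/2 - 1 := by
  classical
  set f : ℕ → Fin n := fun i => ⟨wf n i, wf_lt n i hn⟩ with hf
  refine ⟨(List.range n).map f, ?_, by simp, ?_⟩
  · apply List.Nodup.map_on _ List.nodup_range
    intro i hi j hj hij
    simp only [List.mem_range] at hi hj
    rw [hf] at hij
    simp only [Fin.mk.injEq] at hij
    simp only [wf, Nat.min_def] at hij
    split_ifs at hij <;> first | contradiction | omega
  · rw [orderingSum_eq_sum (pathG n) (f 0)]
    simp only [List.length_map, List.length_range]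
    have hget : ∀ i, i < n → ((List.range n).map f).getD i (f 0) = f i := by
      intro i hi
      rw [List.getD_eq_getElem _ _ (by simp; omega)]
      simp
    have hterm : ∀ i ∈ Finset.range (n-1),
        (pathG n).dist (((List.range n).map f).getD i (f 0))
          (((List.range n).map f).getD (i+1) (f 0))
        = (if n % 2 = 0 then n/2 + i % 2 else (if i = 0 then n/2 else n - i)) := by
      intro i hi
      simp only [Finset.mem_range] at hi
      rw [hget i (by omega), hget (i+1) (by omega), pathG_dist]
      show (wf n i - wf n (i+1)) + (wf n (i+1) - wf n i) = _
      simp only [wf, Nat.min_def]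
      split_ifs <;> first | contradiction | omega
    rw [Finset.sum_congr rfl hterm]
    by_cases hpar : n % 2 = 0
    · simp only [hpar, if_true]
      rw [Finset.sum_add_distrib, Finset.sum_const, Finset.card_range, smul_eq_mul,
        sum_mod_two]
      obtain ⟨k, hk⟩ : ∃ k, n = 2 * k := ⟨n/2, by omega⟩
      subst hk
      obtain ⟨m, hm⟩ : ∃ m, k = m + 1 := ⟨k - 1, by omega⟩
      subst hm
      have e1 : 2 * (m+1) / 2 = m + 1 := by omega
      rw [e1]
      have e2 : (2*(m+1))^2 = 2*(2*(m+1)^2) := by ring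
      rw [e2, Nat.mul_div_cancel_left _ (by norm_num)]
      have e0 : 2*(m+1)-1 = 2*m+1 := by omega
      rw [e0]
      have e3 : (2*m+1)*(m+1) + m + 1 = 2*(m+1)^2 := by ring
      omega
    · simp only [hpar, if_false]
      have hr0 : n - 1 = (n - 2) + 1 := by omega
      rw [hr0, Finset.sum_range_succ']
      have hc : ∀ i ∈ Finset.range (n-2),
          (if i + 1 = 0 then n/2 else n - (i+1)) = (n-2-1-i) + 2 := by
        intro i hi
        simp only [Finset.mem_range] at hi
        rw [if_neg (by omega : ¬ i + 1 = 0)]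
        omega
      rw [Finset.sum_congr rfl hc, Finset.sum_range_reflect (fun j => j + 2) (n-2),
        Finset.sum_add_distrib, Finset.sum_const, Finset.card_range, smul_eq_mul,
        Finset.sum_range_id, if_pos (rfl : (0:ℕ) = 0)]
      obtain ⟨m, rfl⟩ : ∃ m, n = 2 * m + 3 := ⟨(n-3)/2, by omega⟩
      have e1 : 2*m+3-2 = 2*m+1 := by omega
      rw [e1]
      have e2 : (2*m+1)*((2*m+1)-1) = 2*(m*(2*m+1)) := by
        rw [show (2*m+1)-1 = 2*m by omega]; ring
      rw [e2, Nat.mul_div_cancel_left _ (by norm_num : 0 < 2)]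
      have e3 : (2*m+3)^2 = 4*m^2+12*m+9 := by ring
      have e5 : m*(2*m+1) = 2*m^2 + m := by ring
      omega


/-- The upper traceable number of the path `P_n`, `n ≥ 2`, equals `n²/2 - 1` if `n` is
even and `(n² - 1)/2 - 1` if `n` is odd. -/
theorem upperTraceable_path (n : ℕ) (hn : 2 ≤ n) :
    IsGreatest {m : ℕ | ∃ l : List (Fin n), l.Nodup ∧ l.length = n ∧ m = orderingSum (pathG n) l}
      (if Even n then n ^ 2 / 2 - 1 else (n ^ 2 - 1) / 2 - 1) := by
  have hval : (if Even n then n ^ 2 / 2 - 1 else (n ^ 2 - 1) / 2 - 1) = n ^ 2 / 2 - 1 := by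
    rcases Nat.even_or_odd n with he | ho
    · rw [if_pos he]
    · rw [if_neg (Nat.not_even_iff_odd.mpr ho)]
      have h2 : Odd (n ^ 2) := ho.pow
      rw [Nat.odd_iff] at h2
      omega
  rw [hval]
  constructor
  · obtain ⟨l, h1, h2, h3⟩ := lower_bound n hn
    exact ⟨l, h1, h2, h3.symm⟩
  · rintro m ⟨l, h1, h2, rfl⟩
    exact upper_bound n hn l h1 h2
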